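/- Let X be a compact Hausdorff space, ∗ a continuous t-norm, and I : C(X,[0,1]) → [0,1] a functional with I(1_X) = 1, preserving ∨ on comonotone functions, and ∗-homogeneous (I(c ∗ φ) = c ∗ I(φ) for c ∈ [0,1]). Define ν(A) = inf{I(φ) : φ ∈ C(X,[0,1]), φ ≡ 1 on A} for nonempty closed A ⊆ X and ν(∅) = 0. Then ν is an upper-semicontinuous capacity on X: ν(X) = 1, ν is monotone on closed sets, and whenever ν(A) < a there is an open set O ⊇ A with ν(K) < a for every compact K ⊆ O. -/

import Mathlib

open unitInterval

noncomputable section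

/-- Two `[0,1]`-valued functions are comonotone. -/
def Comonotone {X : Type*} (f g : X → I) : Prop :=
  ∀ x y : X, 0 ≤ ((f x : ℝ) - (f y : ℝ)) * ((g x : ℝ) - (g y : ℝ))
/-- Pointwise max of a constant with a continuous `[0,1]`-valued map. -/
def cSup {X : Type*} [TopologicalSpace X] (c : I) (f : C(X, I)) : C(X, I) :=
  ⟨fun x => c ⊔ f x, continuous_const.max f.continuous⟩

/-- Pointwise min of a constant with a continuous `[0,1]`-valued map. -/
def cInf {X : Type*} [TopologicalSpace X] (c : I) (f : C(X, I)) : C(X, I) :=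
  ⟨fun x => c ⊓ f x, continuous_const.min f.continuous⟩

/-- Pointwise product of a constant with a continuous `[0,1]`-valued map. -/
def cMul {X : Type*} [TopologicalSpace X] (c : I) (f : C(X, I)) : C(X, I) :=
  ⟨fun x => c * f x,
    Continuous.subtype_mk (continuous_const.mul (continuous_subtype_val.comp f.continuous)) _⟩

/-- Pointwise max of two continuous `[0,1]`-valued maps. -/
def fSup {X : Type*} [TopologicalSpace X] (f g : C(X, I)) : C(X, I) :=
  ⟨fun x => f x ⊔ g x, f.continuous.max g.continuous⟩
/-- A continuous t-norm on `[0,1]`. -/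
structure Tnorm where
  op : I → I → I
  cont : Continuous fun p : I × I => op p.1 p.2
  assoc : ∀ a b c, op (op a b) c = op a (op b c)
  comm : ∀ a b, op a b = op b a
  mono : ∀ ⦃a b c d⦄, a ≤ b → c ≤ d → op a c ≤ op b d
  op_one : ∀ s, op s 1 = s
/-- The map `x ↦ c ∗ f x` for a t-norm `∗`. -/
def tMul {X : Type*} [TopologicalSpace X] (T : Tnorm) (c : I) (f : C(X, I)) : C(X, I) :=
  ⟨fun x => T.op c (f x), T.cont.comp (continuous_const.prodMk f.continuous)⟩

instance : Fact ((0 : ℝ) ≤ 1) := ⟨zero_le_one⟩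

lemma Izero_le (x : I) : (0 : I) ≤ x := x.2.1

lemma Ile_one (x : I) : x ≤ (1 : I) := x.2.2

lemma Tnorm.op_le_left (T : Tnorm) (c t : I) : T.op c t ≤ c := by
  have h1 : t ≤ (1 : I) := Ile_one t
  have := T.mono (le_refl c) h1
  rwa [T.op_one] at this

lemma Tnorm.op_zero (T : Tnorm) (c : I) : T.op c 0 = 0 := by
  apply le_antisymm _ (Izero_le _)
  have h1 : c ≤ (1 : I) := Ile_one c
  have := T.mono h1 (le_refl (0:I))
  rw [T.comm 1 0, T.op_one] at this
  exact this


/-- The set function `ν(A) = inf{I(φ) : φ ≡ 1 on A}` (and `ν(∅) = 0`) associated with a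
normed, comonotonically maxitive, `∗`-homogeneous functional is an
upper-semicontinuous capacity. -/
theorem induced_set_function_is_capacity {X : Type*} [TopologicalSpace X] [CompactSpace X]
    [T2Space X] [Nonempty X] (T : Tnorm) (J : C(X, I) → I)
    (hone : J (ContinuousMap.const X 1) = 1)
    (hmax : ∀ φ ψ : C(X, I), Comonotone (⇑φ) (⇑ψ) → J (fSup φ ψ) = J φ ⊔ J ψ)
    (hhom : ∀ (c : I) (φ : C(X, I)), J (tMul T c φ) = T.op c (J φ))
    (ν : {F : Set X // IsClosed F} → I)
    (hν : ∀ A : {F : Set X // IsClosed F},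
      (A.1.Nonempty → ν A = sInf {y | ∃ φ : C(X, I), (∀ a ∈ A.1, φ a = 1) ∧ y = J φ}) ∧
      (A.1 = ∅ → ν A = 0)) :
    ν ⟨Set.univ, isClosed_univ⟩ = 1 ∧
    (∀ A B : {F : Set X // IsClosed F}, A.1 ⊆ B.1 → ν A ≤ ν B) ∧
    (∀ (A : {F : Set X // IsClosed F}) (a : I), ν A < a →
      ∃ O : Set X, IsOpen O ∧ A.1 ⊆ O ∧
        ∀ K : {F : Set X // IsClosed F}, IsCompact K.1 → K.1 ⊆ O → ν K < a) := by
    classical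
  -- J of constant functions
  have hconst : ∀ c : I, J (ContinuousMap.const X c) = c := by
    intro c
    have h1 : ContinuousMap.const X c = tMul T c (ContinuousMap.const X 1) := by
      ext x; simp [tMul, T.op_one]
    rw [h1, hhom, hone, T.op_one]
  refine ⟨?_, ?_, ?_⟩
  · -- ν univ = 1
    rw [(hν ⟨Set.univ, isClosed_univ⟩).1 Set.univ_nonempty]
    have : {y | ∃ φ : C(X, I), (∀ a ∈ (Set.univ : Set X), φ a = 1) ∧ y = J φ} = {1} := by
      ext y
      constructor
      · rintro ⟨φ, hφ, rfl⟩
        have : φ = ContinuousMap.const X 1 := by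
          ext x; exact congrArg Subtype.val (hφ x (Set.mem_univ x))
        rw [this]; exact hone
      · rintro rfl
        exact ⟨ContinuousMap.const X 1, fun a _ => rfl, hone.symm⟩
    rw [this, sInf_singleton]
  · -- monotone
    intro A B hAB
    rcases Set.eq_empty_or_nonempty A.1 with hA | hA
    · rw [(hν A).2 hA]; exact Izero_le _
    · have hB : B.1.Nonempty := hA.mono hAB
      rw [(hν A).1 hA, (hν B).1 hB]
      apply sInf_le_sInf
      rintro y ⟨φ, hφ, rfl⟩
      exact ⟨φ, fun a ha => hφ a (hAB ha), rfl⟩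
  · -- upper semicontinuity
    intro A a hA
    rcases Set.eq_empty_or_nonempty A.1 with hAe | hAe
    · refine ⟨∅, isOpen_empty, by simp [hAe], fun K _ hK => ?_⟩
      have : K.1 = ∅ := Set.subset_empty_iff.mp hK
      rw [(hν K).2 this]
      calc (0:I) = ν A := ((hν A).2 hAe).symm
        _ < a := hA
    · rw [(hν A).1 hAe] at hA
      obtain ⟨y, ⟨φ, hφA, rfl⟩, hy⟩ := sInf_lt_iff.mp hA
      -- choose c < 1 with J φ < T.op c a
      obtain ⟨c, hc1, hca⟩ : ∃ c : I, c < 1 ∧ J φ < T.op c a := by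
        have hcont : Continuous fun t : I => T.op t a :=
          T.cont.comp (continuous_id.prodMk continuous_const)
        have hU : IsOpen {t : I | J φ < T.op t a} := by
          have : {t : I | J φ < T.op t a} = (fun t : I => T.op t a) ⁻¹' (Set.Ioi (J φ)) := rfl
          rw [this]; exact hcont.isOpen_preimage _ isOpen_Ioi
        have h1U : (1:I) ∈ {t : I | J φ < T.op t a} := by
          show J φ < T.op 1 a
          rwa [T.comm, T.op_one]
        -- approach 1 from below
        set cn : ℕ → I := fun n => Set.projIcc (0:ℝ) 1 zero_le_one (1 - 1/(n+1)) with hcn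
        have htend : Filter.Tendsto cn Filter.atTop (nhds 1) := by
          have h2 : Filter.Tendsto (fun n : ℕ => 1 - 1/((n:ℝ)+1)) Filter.atTop (nhds 1) := by
            have := tendsto_one_div_add_atTop_nhds_zero_nat (𝕜 := ℝ)
            have h3 := Filter.Tendsto.const_sub (1:ℝ) this
            simpa using h3
          have hpc : Continuous (Set.projIcc (0:ℝ) 1 zero_le_one) := continuous_projIcc
          have h4 := (hpc.tendsto (1:ℝ)).comp h2
          have h5 : Set.projIcc (0:ℝ) 1 zero_le_one 1 = 1 := Set.projIcc_of_right_le _ le_rfl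
          rw [h5] at h4
          exact h4
        have hev := htend.eventually (hU.eventually_mem h1U)
        obtain ⟨n, hn⟩ := hev.exists
        refine ⟨cn n, ?_, hn⟩
        show ((cn n : I) : ℝ) < ((1:I):ℝ)
        have : ((cn n : I) : ℝ) = max 0 (min 1 (1 - 1/((n:ℝ)+1))) := rfl
        rw [this]
        have hpos : (0:ℝ) < 1/((n:ℝ)+1) := by positivity
        show max 0 (min 1 (1 - 1/((n:ℝ)+1))) < 1
        apply max_lt one_pos
        calc min 1 (1 - 1/((n:ℝ)+1)) ≤ 1 - 1/((n:ℝ)+1) := min_le_right _ _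
          _ < 1 := by linarith
      refine ⟨{x | (c:ℝ) < φ x}, ?_, ?_, ?_⟩
      · have : {x | (c:ℝ) < φ x} = (fun x => (φ x : ℝ)) ⁻¹' Set.Ioi (c:ℝ) := rfl
        rw [this]
        exact (continuous_subtype_val.comp φ.continuous).isOpen_preimage _ isOpen_Ioi
      · intro x hx
        show (c:ℝ) < φ x
        rw [hφA x hx]
        exact hc1
      · intro K hKc hKO
        rcases Set.eq_empty_or_nonempty K.1 with hKe | hKe
        · rw [(hν K).2 hKe]
          exact lt_of_le_of_lt (Izero_le _) hA
        · -- min of φ on K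
          obtain ⟨x0, hx0K, hx0⟩ := hKc.exists_isMinOn hKe
            ((continuous_subtype_val.comp φ.continuous).continuousOn)
          set m : ℝ := (φ x0 : ℝ) with hm
          have hcm : (c:ℝ) < m := hKO hx0K
          -- the auxiliary function ψ
          set g : X → ℝ := fun x => ((φ x : ℝ) - c) / (m - c) with hg
          have hgc : Continuous g :=
            ((continuous_subtype_val.comp φ.continuous).sub continuous_const).div_const _
          set ψ : C(X, I) := ⟨fun x => Set.projIcc (0:ℝ) 1 zero_le_one (g x),
            continuous_projIcc.comp hgc⟩ with hψ
          have hgmono : ∀ x y : X, (φ x : ℝ) ≤ (φ y : ℝ) → ψ x ≤ ψ y := by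
            intro x y h
            exact Set.monotone_projIcc zero_le_one ((div_le_div_iff_of_pos_right (by linarith)).mpr (by linarith))
          -- ψ = 1 on K
          have hψK : ∀ x ∈ K.1, ψ x = 1 := by
            intro x hx
            have h1 : m ≤ (φ x : ℝ) := hx0 hx
            have : (1:ℝ) ≤ g x := by
              rw [hg]
              rw [le_div_iff₀ (by linarith)]
              linarith
            show Set.projIcc (0:ℝ) 1 zero_le_one (g x) = 1
            rw [Set.projIcc_of_right_le _ this]
            rfl
          -- tMul T c ψ ≤ φ pointwise
          have hle : ∀ x, T.op c (ψ x) ≤ φ x := by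
            intro x
            rcases le_or_gt (φ x : ℝ) (c : ℝ) with h | h
            · have hg0 : g x ≤ 0 := div_nonpos_of_nonpos_of_nonneg (by linarith) (by linarith)
              have : ψ x = 0 := by
                show Set.projIcc (0:ℝ) 1 zero_le_one (g x) = 0
                rw [Set.projIcc_of_le_left _ hg0]
                rfl
              rw [this, T.op_zero]
              exact Izero_le _
            · calc T.op c (ψ x) ≤ c := T.op_le_left c _
                _ ≤ φ x := le_of_lt h
          -- comonotone
          have hcom : Comonotone (⇑φ) (⇑(tMul T c ψ)) := by
            intro x y
            rcases le_total (φ x : ℝ) (φ y : ℝ) with h | h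
            · have h2 : T.op c (ψ x) ≤ T.op c (ψ y) := T.mono le_rfl (hgmono x y h)
              have h2' : (T.op c (ψ x) : ℝ) ≤ (T.op c (ψ y) : ℝ) := h2
              show (0:ℝ) ≤ ((φ x : ℝ) - (φ y : ℝ)) * ((T.op c (ψ x) : ℝ) - (T.op c (ψ y) : ℝ))
              nlinarith
            · have h2 : T.op c (ψ y) ≤ T.op c (ψ x) := T.mono le_rfl (hgmono y x h)
              have h2' : (T.op c (ψ y) : ℝ) ≤ (T.op c (ψ x) : ℝ) := h2
              show (0:ℝ) ≤ ((φ x : ℝ) - (φ y : ℝ)) * ((T.op c (ψ x) : ℝ) - (T.op c (ψ y) : ℝ))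
              nlinarith
          have hsup : fSup φ (tMul T c ψ) = φ := by
            ext x
            show ((φ x ⊔ T.op c (ψ x) : I) : ℝ) = φ x
            rw [sup_eq_left.mpr (hle x)]
          have key : T.op c (J ψ) ≤ J φ := by
            have := hmax φ (tMul T c ψ) hcom
            rw [hsup, hhom] at this
            exact sup_eq_left.mp this.symm
          have hJψ : J ψ < a := by
            by_contra h
            push_neg at h
            have : T.op c a ≤ T.op c (J ψ) := T.mono le_rfl h
            exact absurd (this.trans key) (not_le.mpr hca)
          rw [(hν K).1 hKe]
          calc sInf {y | ∃ φ : C(X, I), (∀ a ∈ K.1, φ a = 1) ∧ y = J φ}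
              ≤ J ψ := sInf_le ⟨ψ, hψK, rfl⟩
            _ < a := hJψ
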